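/- Let C be a monoidal category equipped with a commutor σ, with local rules τ. Then for all objects A, B, C, D, the morphism τ^A_{B⊗C,D} factors through the local rules τ^{A⊗B}_{C,D} and τ^A_{B,D}: precisely, α_{A⊗D,B,C} ∘ (τ^A_{B,D} ⊗ 1_C) ∘ τ^{A⊗B}_{C,D} = τ^A_{B⊗C,D} ∘ (α_{A,B,C} ⊗ 1_D) as morphisms ((A⊗B)⊗C)⊗D ⟶ (A⊗D)⊗(B⊗C). -/

import Mathlib

open CategoryTheory MonoidalCategory

universe v u

/-- A commutor on a monoidal category: a natural family of isomorphisms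
`σ_{A,B} : A ⊗ B ⟶ B ⊗ A` satisfying the unit, symmetry and coboundary axioms.
A monoidal category with a commutor is a coboundary category. -/
structure Commutor (V : Type u) [Category.{v} V] [MonoidalCategory V] where
  σ : ∀ A B : V, A ⊗ B ⟶ B ⊗ A
  naturality : ∀ {A A' B B' : V} (f : A ⟶ A') (g : B ⟶ B'),
    (f ⊗ₘ g) ≫ σ A' B' = σ A B ≫ (g ⊗ₘ f)
  unit_right : ∀ A : V, σ A (𝟙_ V) = (ρ_ A).hom ≫ (λ_ A).inv
  unit_left : ∀ B : V, σ (𝟙_ V) B = (λ_ B).hom ≫ (ρ_ B).inv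
  symmetry : ∀ A B : V, σ A B ≫ σ B A = 𝟙 (A ⊗ B)
  coboundary : ∀ A B C : V,
    (α_ A B C).hom ≫ (𝟙 A ⊗ₘ σ B C) ≫ σ A (C ⊗ B) ≫ (α_ C B A).hom =
      (σ A B ⊗ₘ 𝟙 C) ≫ σ (B ⊗ A) C

/-- The local rule `τ^A_{B,C} : (A⊗B)⊗C ⟶ (A⊗C)⊗B`. -/
def localRule {V : Type u} [Category.{v} V] [MonoidalCategory V] (c : Commutor V)
    (A B C : V) : (A ⊗ B) ⊗ C ⟶ (A ⊗ C) ⊗ B :=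
  (c.σ A B ⊗ₘ 𝟙 C) ≫ (α_ B A C).hom ≫ c.σ B (A ⊗ C)



section AuxCommutor

variable {V : Type u} [Category.{v} V] [MonoidalCategory V]

lemma Commutor.symm_assoc (c : Commutor V) (A B : V) {X : V} (f : A ⊗ B ⟶ X) :
    c.σ A B ≫ c.σ B A ≫ f = f := by
  rw [← Category.assoc, c.symmetry, Category.id_comp]

lemma Commutor.isIso_σ (c : Commutor V) (A B : V) : IsIso (c.σ A B) :=
  ⟨c.σ B A, c.symmetry A B, c.symmetry B A⟩

lemma commutor_key (c : Commutor V) (A B C : V) :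
    c.σ (A ⊗ B) C ≫ (𝟙 C ⊗ₘ c.σ A B) ≫ (α_ C B A).inv ≫ (c.σ C B ⊗ₘ 𝟙 A) =
      (α_ A B C).hom ≫ c.σ A (B ⊗ C) := by
  have : IsIso (c.σ (B ⊗ C) A) := c.isIso_σ _ _
  rw [← cancel_mono (c.σ (B ⊗ C) A)]
  simp only [Category.assoc]
  rw [← c.coboundary C B A]
  have e : (𝟙 C ⊗ₘ c.σ A B) ≫ (𝟙 C ⊗ₘ c.σ B A) = 𝟙 (C ⊗ (A ⊗ B)) := by
    rw [← id_tensor_comp, c.symmetry, id_tensorHom_id]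
  simp only [Iso.inv_hom_id_assoc, c.symmetry, Category.comp_id,
    reassoc_of% e, Category.id_comp, c.symm_assoc]

lemma commutor_step (c : Commutor V) (B C X : V) :
    c.σ C (X ⊗ B) ≫ (α_ X B C).hom =
      (𝟙 C ⊗ₘ c.σ X B) ≫ (α_ C B X).inv ≫ (c.σ C B ⊗ₘ 𝟙 X) ≫ c.σ (B ⊗ C) X := by
  have h := c.coboundary C B X
  have : IsIso (𝟙 C ⊗ₘ c.σ B X) :=
    ⟨𝟙 C ⊗ₘ c.σ X B, by rw [← id_tensor_comp, c.symmetry, id_tensorHom_id],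
      by rw [← id_tensor_comp, c.symmetry, id_tensorHom_id]⟩
  rw [← cancel_epi (𝟙 C ⊗ₘ c.σ B X)]
  have h' : (𝟙 C ⊗ₘ c.σ B X) ≫ c.σ C (X ⊗ B) ≫ (α_ X B C).hom =
      (α_ C B X).inv ≫ (c.σ C B ⊗ₘ 𝟙 X) ≫ c.σ (B ⊗ C) X := by
    rw [Iso.eq_inv_comp]
    simpa only [Category.assoc] using h
  rw [h']
  have e : (𝟙 C ⊗ₘ c.σ B X) ≫ (𝟙 C ⊗ₘ c.σ X B) = 𝟙 (C ⊗ (B ⊗ X)) := by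
    rw [← id_tensor_comp, c.symmetry, id_tensorHom_id]
  rw [reassoc_of% e]

end AuxCommutor

set_option maxHeartbeats 1000000 in

/-- `τ^A_{B⊗C,D}` factors through `τ^{A⊗B}_{C,D}` and `τ^A_{B,D}`:
`α_{A⊗D,B,C} ∘ (τ^A_{B,D} ⊗ 1_C) ∘ τ^{A⊗B}_{C,D} = τ^A_{B⊗C,D} ∘ (α_{A,B,C} ⊗ 1_D)`. -/
theorem localRule_tensor_middle {V : Type u} [Category.{v} V] [MonoidalCategory V]
    (c : Commutor V) (A B C D : V) :
    localRule c (A ⊗ B) C D ≫ (localRule c A B D ⊗ₘ 𝟙 C) ≫ (α_ (A ⊗ D) B C).hom =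
      ((α_ A B C).hom ⊗ₘ 𝟙 D) ≫ localRule c A (B ⊗ C) D := by
  unfold localRule
  simp only [Category.assoc]
  -- Step A: naturality of σ against the local rule τ^A_{B,D}
  have natA : c.σ C ((A ⊗ B) ⊗ D) ≫
      (((c.σ A B ⊗ₘ 𝟙 D) ≫ (α_ B A D).hom ≫ c.σ B (A ⊗ D)) ⊗ₘ 𝟙 C) =
      (𝟙 C ⊗ₘ ((c.σ A B ⊗ₘ 𝟙 D) ≫ (α_ B A D).hom ≫ c.σ B (A ⊗ D))) ≫
        c.σ C ((A ⊗ D) ⊗ B) :=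
    (c.naturality (𝟙 C) ((c.σ A B ⊗ₘ 𝟙 D) ≫ (α_ B A D).hom ≫ c.σ B (A ⊗ D))).symm
  rw [reassoc_of% natA]
  -- Step B: the coboundary-derived step for σ C ((A⊗D)⊗B) ≫ α
  rw [commutor_step c B C (A ⊗ D)]
  -- Step C: expand the whiskered composite and cancel σ B (A⊗D) ≫ σ (A⊗D) B
  simp only [id_tensor_comp, Category.assoc]
  have e1 : (𝟙 C ⊗ₘ c.σ B (A ⊗ D)) ≫ (𝟙 C ⊗ₘ c.σ (A ⊗ D) B) = 𝟙 (C ⊗ (B ⊗ (A ⊗ D))) := by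
    rw [← id_tensor_comp, c.symmetry, id_tensorHom_id]
  rw [reassoc_of% e1]
  -- Step D: associator naturality
  have natD : (α_ C (A ⊗ B) D).hom ≫ (𝟙 C ⊗ₘ (c.σ A B ⊗ₘ 𝟙 D)) =
      ((𝟙 C ⊗ₘ c.σ A B) ⊗ₘ 𝟙 D) ≫ (α_ C (B ⊗ A) D).hom :=
    (associator_naturality (𝟙 C) (c.σ A B) (𝟙 D)).symm
  rw [reassoc_of% natD]
  -- Step E: pentagon coherence
  have pent : (α_ C (B ⊗ A) D).hom ≫ (𝟙 C ⊗ₘ (α_ B A D).hom) ≫ (α_ C B (A ⊗ D)).inv =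
      ((α_ C B A).inv ⊗ₘ 𝟙 D) ≫ (α_ (C ⊗ B) A D).hom := by
    coherence
  rw [reassoc_of% pent]
  -- Step F: associator naturality for σ C B
  have natF : (α_ (C ⊗ B) A D).hom ≫ (c.σ C B ⊗ₘ 𝟙 (A ⊗ D)) =
      ((c.σ C B ⊗ₘ 𝟙 A) ⊗ₘ 𝟙 D) ≫ (α_ (B ⊗ C) A D).hom := by
    have := (associator_naturality (c.σ C B) (𝟙 A) (𝟙 D)).symm
    simpa only [id_tensorHom_id] using this
  rw [reassoc_of% natF]
  -- Step G: the key lemma tensored with 𝟙 D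
  have keyD : (c.σ (A ⊗ B) C ⊗ₘ 𝟙 D) ≫ ((𝟙 C ⊗ₘ c.σ A B) ⊗ₘ 𝟙 D) ≫
      ((α_ C B A).inv ⊗ₘ 𝟙 D) ≫ ((c.σ C B ⊗ₘ 𝟙 A) ⊗ₘ 𝟙 D) =
      ((α_ A B C).hom ⊗ₘ 𝟙 D) ≫ (c.σ A (B ⊗ C) ⊗ₘ 𝟙 D) := by
    rw [← comp_tensor_id, ← comp_tensor_id, ← comp_tensor_id, commutor_key,
      comp_tensor_id]
  rw [reassoc_of% keyD]
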